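/- In the Poisson short-rate model r_t = r_0 + δ N_t with N a Poisson process of intensity λ and δ > 0, the bond prices P(t,T) = E[exp(−∫_t^T r_u du) | F_t] satisfy z(t,T) = r_t + λ − (λ/(δ(T−t)))(1 − e^{−δ(T−t)}), where z(t,T) = −(1/(T−t)) log P(t,T). -/

import Mathlib

open MeasureTheory ProbabilityTheory Filter Topology
open scoped NNReal

lemma riemann_left_mono' {a b : ℝ} (hab : a ≤ b) {f : ℝ → ℝ}
    (hf : MonotoneOn f (Set.Icc a b)) :
    Tendsto (fun n : ℕ => ∑ i ∈ Finset.range n, f (a + i * ((b - a) / n)) * ((b - a) / n))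
      atTop (𝓝 (∫ u in a..b, f u)) := by
  have key : ∀ n : ℕ, 1 ≤ n →
      (∑ i ∈ Finset.range n, f (a + i * ((b - a) / n)) * ((b - a) / n)) ≤ (∫ u in a..b, f u) ∧
      (∫ u in a..b, f u) ≤ (∑ i ∈ Finset.range n, f (a + i * ((b - a) / n)) * ((b - a) / n))
        + (f b - f a) * ((b - a) / n) := by
    intro n hn
    have hn0 : (0 : ℝ) < n := by exact_mod_cast hn
    set Δ : ℝ := (b - a) / n with hΔ
    have hΔ0 : 0 ≤ Δ := div_nonneg (by linarith) hn0.le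
    set x : ℕ → ℝ := fun i => a + i * Δ with hx
    have hxmono : ∀ i : ℕ, x i ≤ x (i + 1) := by
      intro i; simp only [hx]; push_cast; nlinarith
    have hxmem : ∀ i : ℕ, i ≤ n → x i ∈ Set.Icc a b := by
      intro i hi
      constructor
      · simp only [hx]; nlinarith [Nat.cast_nonneg (α := ℝ) i]
      · simp only [hx]
        have : (i : ℝ) ≤ n := by exact_mod_cast hi
        have h1 : (i:ℝ) * Δ ≤ n * Δ := by nlinarith
        have h2 : (n:ℝ) * Δ = b - a := by rw [hΔ]; field_simp
        linarith
    have hxsub : ∀ i : ℕ, i < n → Set.uIcc (x i) (x (i + 1)) ⊆ Set.Icc a b := by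
      intro i hi
      rw [Set.uIcc_of_le (hxmono i)]
      exact Set.Icc_subset_Icc (hxmem i hi.le).1 (hxmem (i+1) hi).2
    have hint : ∀ i : ℕ, i < n → IntervalIntegrable f MeasureTheory.volume (x i) (x (i+1)) :=
      fun i hi => (hf.mono (hxsub i hi)).intervalIntegrable
    have hx0 : x 0 = a := by simp [hx]
    have hxn : x n = b := by
      show a + n * Δ = b
      rw [hΔ]; field_simp; ring
    have hsplit : (∫ u in a..b, f u) = ∑ i ∈ Finset.range n, ∫ u in (x i)..(x (i+1)), f u := by
      rw [intervalIntegral.sum_integral_adjacent_intervals (fun i hi => hint i hi), hx0, hxn]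
    have hdiff : ∀ i, x (i+1) - x i = Δ := by
      intro i; simp only [hx]; push_cast; ring
    have hlow : ∀ i : ℕ, i < n → f (x i) * Δ ≤ ∫ u in (x i)..(x (i+1)), f u := by
      intro i hi
      have : ∫ u in (x i)..(x (i+1)), f (x i) ≤ ∫ u in (x i)..(x (i+1)), f u := by
        apply intervalIntegral.integral_mono_on (hxmono i) (by simp) (hint i hi)
        intro u hu
        exact hf (hxmem i hi.le) (hxsub i hi (by rw [Set.uIcc_of_le (hxmono i)]; exact hu)) hu.1
      simpa [intervalIntegral.integral_const, hdiff i, smul_eq_mul, mul_comm] using this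
    have hhigh : ∀ i : ℕ, i < n → (∫ u in (x i)..(x (i+1)), f u) ≤ f (x (i+1)) * Δ := by
      intro i hi
      have : ∫ u in (x i)..(x (i+1)), f u ≤ ∫ u in (x i)..(x (i+1)), f (x (i+1)) := by
        apply intervalIntegral.integral_mono_on (hxmono i) (hint i hi) (by simp)
        intro u hu
        exact hf (hxsub i hi (by rw [Set.uIcc_of_le (hxmono i)]; exact hu)) (hxmem (i+1) hi) hu.2
      simpa [intervalIntegral.integral_const, hdiff i, smul_eq_mul, mul_comm] using this
    constructor
    · rw [hsplit]
      exact Finset.sum_le_sum (fun i hi => hlow i (Finset.mem_range.mp hi))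
    · rw [hsplit]
      have h1 : ∑ i ∈ Finset.range n, (∫ u in (x i)..(x (i+1)), f u)
          ≤ ∑ i ∈ Finset.range n, f (x (i+1)) * Δ :=
        Finset.sum_le_sum (fun i hi => hhigh i (Finset.mem_range.mp hi))
      have h2 : ∑ i ∈ Finset.range n, f (x (i+1)) * Δ
          = (∑ i ∈ Finset.range n, f (x i) * Δ) + (f b - f a) * Δ := by
        have := Finset.sum_range_sub (fun i => f (x i) * Δ) n
        have h3 : ∑ i ∈ Finset.range n, (f (x (i+1)) * Δ - f (x i) * Δ)
            = f (x n) * Δ - f (x 0) * Δ := this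
        rw [Finset.sum_sub_distrib] at h3
        rw [hx0, hxn] at h3
        linarith [h3]
      linarith
  -- squeeze
  have h0 : Tendsto (fun n : ℕ => (∫ u in a..b, f u) - (f b - f a) * ((b - a) / n)) atTop
      (𝓝 (∫ u in a..b, f u)) := by
    have : Tendsto (fun n : ℕ => ((f b - f a) * (b - a)) / n) atTop (𝓝 0) :=
      tendsto_const_div_atTop_nhds_zero_nat _
    have := (tendsto_const_nhds (x := (∫ u in a..b, f u)) (f := atTop (α := ℕ))).sub this
    simpa [mul_div_assoc] using this
  refine tendsto_of_tendsto_of_tendsto_of_le_of_le' h0 tendsto_const_nhds ?_ ?_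
  · filter_upwards [eventually_ge_atTop 1] with n hn
    linarith [(key n hn).2]
  · filter_upwards [eventually_ge_atTop 1] with n hn
    exact (key n hn).1

lemma poisson_exp_moment' (r : ℝ≥0) (c : ℝ) (hc : 0 ≤ c) :
    ∫ k : ℕ, Real.exp (-c * k) ∂(poissonMeasure r)
      = Real.exp ((r : ℝ) * (Real.exp (-c) - 1)) := by
  have hb : ∀ k : ℕ, Real.exp (-c * k) ≤ 1 := by
    intro k
    rw [Real.exp_le_one_iff, neg_mul]
    simp only [neg_nonpos]
    positivity
  have hint : Integrable (fun k : ℕ => Real.exp (-c * k)) (poissonMeasure r) := by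
    refine Integrable.mono' (integrable_const 1) ?_ ?_
    · exact (measurable_from_nat (f := fun k : ℕ => Real.exp (-c * k))).aestronglyMeasurable
    · refine Filter.Eventually.of_forall (fun k => ?_)
      rw [Real.norm_eq_abs, abs_of_pos (Real.exp_pos _)]
      exact hb k
  rw [integral_countable' hint]
  have hsing : ∀ k : ℕ, ((poissonMeasure r {k}).toReal) = poissonPMFReal r k := by
    intro k
    rw [poissonMeasure_singleton, ENNReal.toReal_ofReal (by positivity)]
    rfl
  have hterm : ∀ k : ℕ, (poissonMeasure r {k}).toReal • Real.exp (-c * k)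
      = Real.exp (-(r:ℝ)) * (((r:ℝ) * Real.exp (-c)) ^ k / (Nat.factorial k : ℝ)) := by
    intro k
    rw [smul_eq_mul, hsing k, poissonPMFReal]
    have h1 : Real.exp (-c * k) = Real.exp (-c) ^ k := by
      rw [mul_comm, Real.exp_nat_mul]
    rw [h1, mul_pow]
    ring
  calc ∑' k : ℕ, (poissonMeasure r {k}).toReal • Real.exp (-c * k)
      = ∑' k : ℕ, Real.exp (-(r:ℝ)) * (((r:ℝ) * Real.exp (-c)) ^ k / (Nat.factorial k : ℝ)) := by
        exact tsum_congr hterm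
    _ = Real.exp (-(r:ℝ)) * ∑' k : ℕ, (((r:ℝ) * Real.exp (-c)) ^ k / (Nat.factorial k : ℝ)) := by
        rw [tsum_mul_left]
    _ = Real.exp (-(r:ℝ)) * Real.exp ((r:ℝ) * Real.exp (-c)) := by
        congr 1
        have h := (NormedSpace.expSeries_div_hasSum_exp ((r:ℝ) * Real.exp (-c))).tsum_eq
        rw [← Real.exp_eq_exp_ℝ] at h
        exact h
    _ = Real.exp ((r : ℝ) * (Real.exp (-c) - 1)) := by
        rw [← Real.exp_add]; ring_nf

lemma sum_sum_range_eq' (n : ℕ) (a : ℕ → ℝ) :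
    ∑ i ∈ Finset.range n, ∑ j ∈ Finset.range i, a j
      = ∑ j ∈ Finset.range n, ((n - 1 - j : ℕ) : ℝ) * a j := by
  induction n with
  | zero => simp
  | succ n ih =>
    rw [Finset.sum_range_succ, ih, Finset.sum_range_succ]
    have hlast : ((n + 1 - 1 - n : ℕ) : ℝ) = 0 := by norm_num
    rw [hlast, zero_mul, add_zero]
    rw [← Finset.sum_add_distrib]
    apply Finset.sum_congr rfl
    intro j hj
    have hjn : j < n := Finset.mem_range.mp hj
    have h1 : (n + 1 - 1 - j : ℕ) = (n - 1 - j : ℕ) + 1 := by omega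
    rw [h1]
    push_cast
    ring

theorem poisson_model_yield_formula
    {Ω : Type*} {F : MeasurableSpace Ω} (μ : Measure Ω) [IsProbabilityMeasure μ]
    (ℱ : ℝ → MeasurableSpace Ω) (hℱ_mono : Monotone ℱ) (hℱ_le : ∀ u, ℱ u ≤ F)
    (N : ℝ → Ω → ℕ) (lam : ℝ≥0) (hlam : 0 < lam) (δ : ℝ) (hδ : 0 < δ) (r₀ : ℝ)
    (hN0 : ∀ ω, N 0 ω = 0)
    (hNmeas : Measurable fun p : ℝ × Ω => N p.1 p.2)
    (hNadapted : ∀ u, Measurable[ℱ u] (N u))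
    (hNmono : ∀ ω, Monotone fun u => N u ω)
    (hNdist : ∀ u v : ℝ, 0 ≤ u → u ≤ v →
      Measure.map (fun ω => N v ω - N u ω) μ = poissonMeasure (lam * Real.toNNReal (v - u)))
    (hNindep : ∀ u v : ℝ, 0 ≤ u → u ≤ v →
      Indep (MeasurableSpace.comap (fun ω => N v ω - N u ω) inferInstance) (ℱ u) μ)
    (P : ℝ → ℝ → Ω → ℝ)
    (hP : ∀ t T : ℝ, 0 ≤ t → t ≤ T →
      P t T =ᵐ[μ]
        μ[fun ω => Real.exp (-(∫ u in t..T, (r₀ + δ * (N u ω : ℝ)))) | ℱ t])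
    (t T : ℝ) (ht : 0 ≤ t) (htT : t < T) :
    ∀ᵐ ω ∂μ, -(1 / (T - t)) * Real.log (P t T ω)
      = r₀ + δ * (N t ω : ℝ) + (lam : ℝ)
        - ((lam : ℝ) / (δ * (T - t))) * (1 - Real.exp (-(δ * (T - t)))) := by
  have hτ : (0 : ℝ) < T - t := sub_pos.mpr htT
  have hNmeasF : ∀ u, Measurable (N u) := fun u => (hNadapted u).mono (hℱ_le u) le_rfl
  have castM : Measurable (Nat.cast : ℕ → ℝ) := measurable_from_nat
  -- partition data
  set Δ : ℕ → ℝ := fun n => (T - t) / n with hΔdef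
  have hΔ0 : ∀ n : ℕ, 0 ≤ Δ n := fun n => div_nonneg hτ.le (Nat.cast_nonneg n)
  set x : ℕ → ℕ → ℝ := fun n i => t + i * Δ n with hxdef
  have hxt : ∀ n i, t ≤ x n i := by
    intro n i; simp only [hxdef]; nlinarith [Nat.cast_nonneg (α := ℝ) i, hΔ0 n]
  have hx_nonneg : ∀ n i, 0 ≤ x n i := fun n i => le_trans ht (hxt n i)
  have hx_succ : ∀ n i, x n i ≤ x n (i + 1) := by
    intro n i; simp only [hxdef]; push_cast; nlinarith [hΔ0 n]
  have hx_mono : ∀ n, Monotone (x n) := fun n => monotone_nat_of_le_succ (hx_succ n)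
  have hxd : ∀ n i, x n (i + 1) - x n i = Δ n := by
    intro n i; simp only [hxdef]; push_cast; ring
  have hx0 : ∀ n, x n 0 = t := by intro n; simp [hxdef]
  -- core functions
  set I : Ω → ℝ := fun ω => ∫ u in t..T, ((N u ω : ℝ) - (N t ω : ℝ)) with hIdef
  set g : Ω → ℝ := fun ω => Real.exp (-δ * I ω) with hgdef
  set C : Ω → ℝ := fun ω => Real.exp (-((r₀ + δ * (N t ω : ℝ)) * (T - t))) with hCdef
  set Y : Ω → ℝ := fun ω => Real.exp (-(∫ u in t..T, (r₀ + δ * (N u ω : ℝ)))) with hYdef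
  set S : ℕ → Ω → ℝ :=
    fun n ω => ∑ i ∈ Finset.range n, ((N (x n i) ω : ℝ) - (N t ω : ℝ)) * Δ n with hSdef
  set gn : ℕ → Ω → ℝ := fun n ω => Real.exp (-δ * S n ω) with hgndef
  have hNcastmono : ∀ ω, Monotone (fun u => (N u ω : ℝ)) :=
    fun ω a b hab => Nat.cast_le.mpr (hNmono ω hab)
  -- convergence of Riemann sums
  have hStend : ∀ ω, Tendsto (fun n => S n ω) atTop (𝓝 (I ω)) := by
    intro ω
    have := riemann_left_mono' (a := t) (b := T) htT.le
      (f := fun u => (N u ω : ℝ) - (N t ω : ℝ))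
      (fun a ha b hb hab => by simpa using hNcastmono ω hab)
    exact this
  have hgtend : ∀ ω, Tendsto (fun n => gn n ω) atTop (𝓝 (g ω)) := by
    intro ω
    exact (Real.continuous_exp.tendsto _).comp ((hStend ω).const_mul (-δ))
  have hS0 : ∀ n ω, 0 ≤ S n ω := by
    intro n ω
    apply Finset.sum_nonneg
    intro i _
    have h1 : (N t ω : ℝ) ≤ (N (x n i) ω : ℝ) := hNcastmono ω (hxt n i)
    nlinarith [hΔ0 n]
  have hgn_le : ∀ n ω, gn n ω ≤ 1 := by
    intro n ω
    rw [hgndef]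
    apply Real.exp_le_one_iff.mpr
    nlinarith [hS0 n ω]
  have hgn_pos : ∀ n ω, 0 < gn n ω := fun n ω => Real.exp_pos _
  have hgnmeas : ∀ n, Measurable (gn n) := by
    intro n
    apply Real.measurable_exp.comp
    apply Measurable.const_mul
    apply Finset.measurable_sum
    intro i _
    exact ((castM.comp (hNmeasF (x n i))).sub (castM.comp (hNmeasF t))).mul_const _
  have hgmeas : Measurable g :=
    measurable_of_tendsto_metrizable hgnmeas (tendsto_pi_nhds.mpr hgtend)
  have hg_pos : ∀ ω, 0 < g ω := fun ω => Real.exp_pos _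
  have hg_le : ∀ ω, g ω ≤ 1 := by
    intro ω
    have hI0 : 0 ≤ I ω := ge_of_tendsto (hStend ω) (Eventually.of_forall (fun n => hS0 n ω))
    rw [hgdef]
    apply Real.exp_le_one_iff.mpr
    nlinarith
  -- the constant K
  set K : ℝ := Real.exp ((lam : ℝ) * ((1 - Real.exp (-(δ * (T - t)))) / δ - (T - t))) with hKdef
  -- the master identity
  have master : ∀ (X : Ω → ℝ) (b : ℝ), Measurable[ℱ t] X → (∀ ω, ‖X ω‖ ≤ b) →
      ∫ ω, X ω * g ω ∂μ = (∫ ω, X ω ∂μ) * K := by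
    intro X b hXmeas hXbound
    have hXmeasF : Measurable X := hXmeas.mono (hℱ_le t) le_rfl
    set R : ℕ → ℝ :=
      fun n => ∑ k ∈ Finset.range n, Δ n * Real.exp (-(δ * Δ n * k)) with hRdef
    -- per-n product identity
    have key : ∀ n : ℕ, ∫ ω, X ω * gn n ω ∂μ
        = (∫ ω, X ω ∂μ) * Real.exp ((lam : ℝ) * (R n - n * Δ n)) := by
      intro n
      set c : ℕ → ℝ := fun j => δ * Δ n * ((n - 1 - j : ℕ) : ℝ) with hcdef
      have hc0 : ∀ j, 0 ≤ c j :=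
        fun j => mul_nonneg (mul_nonneg hδ.le (hΔ0 n)) (Nat.cast_nonneg _)
      set D : ℕ → Ω → ℕ := fun j ω => N (x n (j + 1)) ω - N (x n j) ω with hDdef
      have hDcast : ∀ j ω, ((D j ω : ℕ) : ℝ)
          = (N (x n (j + 1)) ω : ℝ) - (N (x n j) ω : ℝ) := by
        intro j ω
        simp only [hDdef]
        rw [Nat.cast_sub (hNmono ω (hx_succ n j))]
      set φ : ℕ → Ω → ℝ := fun j ω => Real.exp (-(c j) * ((D j ω : ℕ) : ℝ)) with hφdef
      set e : ℕ → ℝ :=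
        fun j => Real.exp ((lam : ℝ) * Δ n * (Real.exp (-(c j)) - 1)) with hedef
      have hφ_pos : ∀ j ω, 0 < φ j ω := fun j ω => Real.exp_pos _
      have hφ_le : ∀ j ω, φ j ω ≤ 1 := by
        intro j ω
        apply Real.exp_le_one_iff.mpr
        rw [neg_mul]
        simp only [neg_nonpos]
        exact mul_nonneg (hc0 j) (Nat.cast_nonneg _)
      have hφmeas : ∀ j, Measurable[ℱ (x n (j + 1))] (φ j) := by
        intro j
        apply Real.measurable_exp.comp
        apply Measurable.const_mul
        apply castM.comp
        exact Measurable.sub (hNadapted (x n (j + 1)))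
          ((hNadapted (x n j)).mono (hℱ_mono (hx_succ n j)) le_rfl)
      have hφmeasF : ∀ j, Measurable (φ j) :=
        fun j => (hφmeas j).mono (hℱ_le _) le_rfl
      -- gn is the product of the φ's
      have hgn_prod : ∀ ω, gn n ω = ∏ j ∈ Finset.range n, φ j ω := by
        intro ω
        have htel : ∀ i : ℕ, (N (x n i) ω : ℝ) - (N t ω : ℝ)
            = ∑ j ∈ Finset.range i, ((D j ω : ℕ) : ℝ) := by
          intro i
          have h1 : ∑ j ∈ Finset.range i, ((D j ω : ℕ) : ℝ)
              = ∑ j ∈ Finset.range i,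
                ((N (x n (j + 1)) ω : ℝ) - (N (x n j) ω : ℝ)) :=
            Finset.sum_congr rfl (fun j _ => hDcast j ω)
          rw [h1, Finset.sum_range_sub (fun j => (N (x n j) ω : ℝ)), hx0 n]
        have hSsum : S n ω = ∑ j ∈ Finset.range n,
            ((n - 1 - j : ℕ) : ℝ) * (((D j ω : ℕ) : ℝ) * Δ n) := by
          simp only [hSdef]
          calc ∑ i ∈ Finset.range n, ((N (x n i) ω : ℝ) - (N t ω : ℝ)) * Δ n
              = ∑ i ∈ Finset.range n, ∑ j ∈ Finset.range i,
                (((D j ω : ℕ) : ℝ) * Δ n) := by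
                refine Finset.sum_congr rfl (fun i _ => ?_)
                rw [htel i, Finset.sum_mul]
            _ = ∑ j ∈ Finset.range n,
                ((n - 1 - j : ℕ) : ℝ) * (((D j ω : ℕ) : ℝ) * Δ n) :=
                sum_sum_range_eq' n _
        simp only [hgndef, hφdef]
        rw [hSsum, Finset.mul_sum, ← Real.exp_sum]
        congr 1
        refine Finset.sum_congr rfl (fun j _ => ?_)
        rw [hcdef]
        ring
      -- inductive step: peel off independent factors
      have Q : ∀ m : ℕ, ∫ ω, X ω * ∏ j ∈ Finset.range m, φ j ω ∂μ
          = (∫ ω, X ω ∂μ) * ∏ j ∈ Finset.range m, e j := by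
        intro m
        induction m with
        | zero => simp
        | succ m ih =>
          set W : Ω → ℝ := fun ω => X ω * ∏ j ∈ Finset.range m, φ j ω with hWdef
          have hWmeas : Measurable[ℱ (x n m)] W := by
            apply Measurable.mul
            · exact hXmeas.mono (hℱ_mono (hxt n m)) le_rfl
            · apply Finset.measurable_prod
              intro j hj
              have hjm : j + 1 ≤ m := Finset.mem_range.mp hj
              exact (hφmeas j).mono (hℱ_mono (hx_mono n hjm)) le_rfl
          have hWmeasF : Measurable W := hWmeas.mono (hℱ_le _) le_rfl
          have hprod_pos : ∀ ω, 0 < ∏ j ∈ Finset.range m, φ j ω :=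
            fun ω => Finset.prod_pos (fun j _ => hφ_pos j ω)
          have hprod_le : ∀ ω, ∏ j ∈ Finset.range m, φ j ω ≤ 1 := by
            intro ω
            apply Finset.prod_le_one
            · exact fun j _ => (hφ_pos j ω).le
            · exact fun j _ => hφ_le j ω
          have hWb : ∀ ω, ‖W ω‖ ≤ b := by
            intro ω
            simp only [hWdef]
            rw [norm_mul]
            calc ‖X ω‖ * ‖∏ j ∈ Finset.range m, φ j ω‖
                ≤ b * 1 := by
                  apply mul_le_mul (hXbound ω) ?_ (norm_nonneg _)
                    (le_trans (norm_nonneg _) (hXbound ω))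
                  rw [Real.norm_eq_abs, abs_of_pos (hprod_pos ω)]
                  exact hprod_le ω
              _ = b := mul_one b
          have hWint : Integrable W μ :=
            Integrable.mono' (integrable_const b) hWmeasF.aestronglyMeasurable
              (Eventually.of_forall hWb)
          have hφint : Integrable (φ m) μ := by
            refine Integrable.mono' (integrable_const 1)
              (hφmeasF m).aestronglyMeasurable (Eventually.of_forall (fun ω => ?_))
            rw [Real.norm_eq_abs, abs_of_pos (hφ_pos m ω)]
            exact hφ_le m ω
          -- independence
          have hDindep := hNindep (x n m) (x n (m + 1)) (hx_nonneg n m) (hx_succ n m)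
          have hindep : IndepFun (fun ω => D m ω) W μ := by
            rw [IndepFun_iff_Indep]
            exact indep_of_indep_of_le_right hDindep hWmeas.comap_le
          have hindepφ : IndepFun (φ m) W μ := by
            have : IndepFun (φ m) W μ := hindep.comp
              (φ := fun k : ℕ => Real.exp (-(c m) * (k : ℝ)))
              (ψ := id) (measurable_from_nat) measurable_id
            exact this
          -- the Poisson factor
          have hφint_val : ∫ ω, φ m ω ∂μ = e m := by
            have hmap := hNdist (x n m) (x n (m + 1)) (hx_nonneg n m) (hx_succ n m)
            have h1 : ∫ ω, φ m ω ∂μ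
                = ∫ k : ℕ, Real.exp (-(c m) * (k : ℝ))
                    ∂(Measure.map (fun ω => N (x n (m + 1)) ω - N (x n m) ω) μ) := by
              rw [integral_map]
              · exact ((hNmeasF _).sub (hNmeasF _)).aemeasurable
              · exact (measurable_from_nat
                  (f := fun k : ℕ => Real.exp (-(c m) * (k : ℝ)))).aestronglyMeasurable
            rw [h1, hmap, poisson_exp_moment' _ _ (hc0 m), hedef]
            congr 1
            have h2 : x n (m + 1) - x n m = Δ n := hxd n m
            rw [h2, NNReal.coe_mul, Real.coe_toNNReal _ (hΔ0 n)]
          calc ∫ ω, X ω * ∏ j ∈ Finset.range (m + 1), φ j ω ∂μ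
              = ∫ ω, W ω * φ m ω ∂μ := by
                refine integral_congr_ae (Eventually.of_forall (fun ω => ?_))
                simp only [hWdef, Finset.prod_range_succ]
                ring
            _ = (∫ ω, W ω ∂μ) * ∫ ω, φ m ω ∂μ := by
                have := hindepφ.symm.integral_mul_eq_mul_integral hWint.aestronglyMeasurable hφint.aestronglyMeasurable
                exact this
            _ = ((∫ ω, X ω ∂μ) * ∏ j ∈ Finset.range m, e j) * e m := by
                rw [← hφint_val, ih]
            _ = (∫ ω, X ω ∂μ) * ∏ j ∈ Finset.range (m + 1), e j := by
                rw [Finset.prod_range_succ]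
                ring
      -- value of the product of the e's
      have hreflect : ∑ j ∈ Finset.range n, Δ n * Real.exp (-(c j)) = R n := by
        simp only [hcdef, hRdef]
        exact Finset.sum_range_reflect
          (fun k : ℕ => Δ n * Real.exp (-(δ * Δ n * (k : ℝ)))) n
      have hprod_e : ∏ j ∈ Finset.range n, e j
          = Real.exp ((lam : ℝ) * (R n - n * Δ n)) := by
        rw [← Real.exp_sum]
        congr 1
        calc ∑ j ∈ Finset.range n, (lam : ℝ) * Δ n * (Real.exp (-(c j)) - 1)
            = (lam : ℝ) * ∑ j ∈ Finset.range n, (Δ n * Real.exp (-(c j)) - Δ n) := by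
              rw [Finset.mul_sum]
              exact Finset.sum_congr rfl (fun j _ => by ring)
          _ = (lam : ℝ) * ((∑ j ∈ Finset.range n, Δ n * Real.exp (-(c j)))
                - n * Δ n) := by
              rw [Finset.sum_sub_distrib, Finset.sum_const, Finset.card_range,
                nsmul_eq_mul]
          _ = (lam : ℝ) * (R n - n * Δ n) := by rw [hreflect]
      calc ∫ ω, X ω * gn n ω ∂μ
          = ∫ ω, X ω * ∏ j ∈ Finset.range n, φ j ω ∂μ := by
            refine integral_congr_ae (Eventually.of_forall (fun ω => ?_))
            simp only [hgn_prod]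
        _ = (∫ ω, X ω ∂μ) * ∏ j ∈ Finset.range n, e j := Q n
        _ = (∫ ω, X ω ∂μ) * Real.exp ((lam : ℝ) * (R n - n * Δ n)) := by rw [hprod_e]
    -- limit of the Riemann sums R
    have hRtend : Tendsto R atTop (𝓝 ((1 - Real.exp (-(δ * (T - t)))) / δ)) := by
      have hmono : MonotoneOn (fun s : ℝ => -Real.exp (-(δ * s)))
          (Set.Icc 0 (T - t)) := by
        intro a _ b' _ hab
        simp only [neg_le_neg_iff]
        exact Real.exp_le_exp.mpr (by nlinarith)
      have h1 := riemann_left_mono' (a := 0) (b := T - t) hτ.le hmono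
      have h2 := h1.neg
      have h3 : (fun n : ℕ => -∑ i ∈ Finset.range n,
          (-Real.exp (-(δ * (0 + i * ((T - t - 0) / n))))) * ((T - t - 0) / n)) = R := by
        funext n
        rw [hRdef, ← Finset.sum_neg_distrib]
        refine Finset.sum_congr rfl (fun k _ => ?_)
        simp only [hΔdef, sub_zero, zero_add, neg_mul, neg_neg]
        rw [show δ * ((k : ℝ) * ((T - t) / n)) = δ * ((T - t) / n) * (k : ℝ) from by ring]
        ring
      have h4 : -∫ u in (0:ℝ)..(T - t), (-Real.exp (-(δ * u)))
          = (1 - Real.exp (-(δ * (T - t)))) / δ := by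
        rw [intervalIntegral.integral_neg, neg_neg]
        have h5 : Set.EqOn (fun u : ℝ => Real.exp (-(δ * u)))
            (fun u => Real.exp (-δ * u)) (Set.uIcc 0 (T - t)) := fun u _ => by norm_num
        rw [intervalIntegral.integral_congr h5,
          intervalIntegral.integral_comp_mul_left (f := Real.exp)
            (neg_ne_zero.mpr (ne_of_gt hδ)),
          integral_exp]
        rw [smul_eq_mul, mul_zero, Real.exp_zero,
          show -δ * (T - t) = -(δ * (T - t)) from by ring]
        have hδ' : δ ≠ 0 := ne_of_gt hδ
        generalize Real.exp (-(δ * (T - t))) = E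
        rw [inv_neg, eq_div_iff hδ']
        field_simp
        ring
      rw [h3, h4] at h2
      exact h2
    -- the two limits
    have hlim2 : Tendsto (fun n : ℕ => (∫ ω, X ω ∂μ)
        * Real.exp ((lam : ℝ) * (R n - n * Δ n))) atTop
        (𝓝 ((∫ ω, X ω ∂μ) * K)) := by
      have hbase : Tendsto (fun n : ℕ => (∫ ω, X ω ∂μ)
          * Real.exp ((lam : ℝ) * (R n - (T - t)))) atTop
          (𝓝 ((∫ ω, X ω ∂μ) * K)) := by
        rw [hKdef]
        apply Tendsto.const_mul
        apply (Real.continuous_exp.tendsto _).comp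
        exact (hRtend.sub tendsto_const_nhds).const_mul _
      refine Tendsto.congr' ?_ hbase
      filter_upwards [eventually_ge_atTop 1] with n hn
      have hn0 : (n : ℝ) ≠ 0 := Nat.cast_ne_zero.mpr (by omega)
      have hnd : (n : ℝ) * Δ n = T - t := by
        simp only [hΔdef]
        field_simp
      rw [hnd]
    have hlim1 : Tendsto (fun n => ∫ ω, X ω * gn n ω ∂μ) atTop
        (𝓝 (∫ ω, X ω * g ω ∂μ)) := by
      apply tendsto_integral_of_dominated_convergence (bound := fun _ => b)
      · exact fun n => (hXmeasF.mul (hgnmeas n)).aestronglyMeasurable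
      · exact integrable_const b
      · intro n
        refine Eventually.of_forall (fun ω => ?_)
        rw [norm_mul]
        calc ‖X ω‖ * ‖gn n ω‖ ≤ b * 1 := by
              apply mul_le_mul (hXbound ω) ?_ (norm_nonneg _)
                (le_trans (norm_nonneg _) (hXbound ω))
              rw [Real.norm_eq_abs, abs_of_pos (hgn_pos n ω)]
              exact hgn_le n ω
          _ = b := mul_one b
      · exact Eventually.of_forall (fun ω => (hgtend ω).const_mul (X ω))
    exact tendsto_nhds_unique hlim1 (hlim2.congr (fun n => (key n).symm))
  -- conditional expectation identification
  have hYeq : ∀ ω, Y ω = C ω * g ω := by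
    intro ω
    have hint2 : IntervalIntegrable (fun u => (N u ω : ℝ) - (N t ω : ℝ))
        MeasureTheory.volume t T :=
      Monotone.intervalIntegrable
        (fun a b' hab => sub_le_sub_right (hNcastmono ω hab) ((N t ω : ℝ)))
    have key : (∫ u in t..T, (r₀ + δ * (N u ω : ℝ)))
        = (r₀ + δ * (N t ω : ℝ)) * (T - t) + δ * I ω := by
      have hcongr : Set.EqOn (fun u => r₀ + δ * (N u ω : ℝ))
          (fun u => (r₀ + δ * (N t ω : ℝ)) + δ * ((N u ω : ℝ) - (N t ω : ℝ)))
          (Set.uIcc t T) := fun u _ => by ring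
      rw [intervalIntegral.integral_congr hcongr,
        intervalIntegral.integral_add (intervalIntegrable_const) (hint2.const_mul δ),
        intervalIntegral.integral_const, intervalIntegral.integral_const_mul]
      simp only [smul_eq_mul, hIdef]
      ring
    simp only [hYdef, hCdef, hgdef]
    rw [key, ← Real.exp_add]
    congr 1
    ring
  have hCmeas : Measurable[ℱ t] C := by
    apply Real.measurable_exp.comp (Measurable.neg ?_)
    exact (((castM.comp (hNadapted t)).const_mul δ).const_add r₀).mul_const _
  set b : ℝ := Real.exp (-r₀ * (T - t)) with hbdef
  have hC_pos : ∀ ω, 0 < C ω := fun ω => Real.exp_pos _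
  have hCbound : ∀ ω, ‖C ω‖ ≤ b := by
    intro ω
    rw [Real.norm_eq_abs, abs_of_pos (hC_pos ω), hCdef, hbdef]
    apply Real.exp_le_exp.mpr
    nlinarith [mul_nonneg (mul_nonneg hδ.le (Nat.cast_nonneg (α := ℝ) (N t ω))) hτ.le]
  have hb0 : 0 < b := Real.exp_pos _
  have hCmeasF : Measurable C := hCmeas.mono (hℱ_le t) le_rfl
  have hCint : Integrable C μ := by
    refine Integrable.mono' (integrable_const b) hCmeasF.aestronglyMeasurable ?_
    exact Eventually.of_forall hCbound
  have hYeq' : Y = fun ω => C ω * g ω := funext hYeq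
  have hYint : Integrable Y μ := by
    rw [hYeq']
    refine Integrable.mono' (integrable_const b) (hCmeasF.mul hgmeas).aestronglyMeasurable ?_
    refine Eventually.of_forall (fun ω => ?_)
    rw [Real.norm_eq_abs, abs_of_pos (mul_pos (hC_pos ω) (hg_pos ω))]
    calc C ω * g ω ≤ C ω * 1 := by
          nlinarith [hg_le ω, (hC_pos ω).le, hg_pos ω]
      _ = C ω := mul_one _
      _ ≤ b := by have := hCbound ω; rwa [Real.norm_eq_abs, abs_of_pos (hC_pos ω)] at this
  have hcond : (fun ω => C ω * K) =ᵐ[μ] μ[Y | ℱ t] := by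
    refine ae_eq_condExp_of_forall_setIntegral_eq (hℱ_le t) hYint ?_ ?_ ?_
    · intro s _ _
      exact ((hCint.mul_const K).integrableOn)
    · intro s hs _
      have hsF : MeasurableSet s := (hℱ_le t) s hs
      have hind : ∀ ω, s.indicator (fun ω => C ω * g ω) ω = s.indicator C ω * g ω := by
        intro ω
        by_cases hω : ω ∈ s <;> simp [Set.indicator, hω]
      have hindmeas : Measurable[ℱ t] (s.indicator C) := hCmeas.indicator hs
      have hindb : ∀ ω, ‖s.indicator C ω‖ ≤ b := by
        intro ω
        by_cases hω : ω ∈ s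
        · simpa [Set.indicator, hω] using hCbound ω
        · simp [Set.indicator, hω, hb0.le]
      calc ∫ ω in s, C ω * K ∂μ = (∫ ω in s, C ω ∂μ) * K := by
            rw [integral_mul_const]
        _ = (∫ ω, s.indicator C ω ∂μ) * K := by rw [integral_indicator hsF]
        _ = ∫ ω, s.indicator C ω * g ω ∂μ := (master (s.indicator C) b hindmeas hindb).symm
        _ = ∫ ω, s.indicator (fun ω => C ω * g ω) ω ∂μ := by
            refine integral_congr_ae (Eventually.of_forall (fun ω => (hind ω).symm))
        _ = ∫ ω in s, C ω * g ω ∂μ := (integral_indicator hsF)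
        _ = ∫ ω in s, Y ω ∂μ := by rw [hYeq']
    · exact StronglyMeasurable.aestronglyMeasurable
        (Measurable.stronglyMeasurable (hCmeas.mul_const K))
  -- conclusion
  have hPae : P t T =ᵐ[μ] fun ω => C ω * K := (hP t T ht htT.le).trans hcond.symm
  filter_upwards [hPae] with ω hω
  rw [hω]
  have hCK : C ω * K = Real.exp (-((r₀ + δ * (N t ω : ℝ)) * (T - t))
      + (lam : ℝ) * ((1 - Real.exp (-(δ * (T - t)))) / δ - (T - t))) := by
    rw [hCdef, hKdef, ← Real.exp_add]
  rw [hCK, Real.log_exp]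
  have hτ' : T - t ≠ 0 := ne_of_gt hτ
  have hδ' : δ ≠ 0 := ne_of_gt hδ
  field_simp
  ring
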